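/- For the generalized Pólya urn sequence of the previous context, the probability that I₁ = ... = I_n = 1 equals ∏_{k=0}^{n-1} (1-α+αk)/(θ+1+αk), and for 0 < α this equals the probability that Beta((1-α)/α, (θ+α)/α)-many i.i.d. Bernoulli trials all succeed, i.e. E[Bⁿ] for B ~ Beta((1-α)/α, (θ+α)/α). -/

import Mathlib

open MeasureTheory ProbabilityTheory Filter Finset

noncomputable def urnBetaMeasure (a b : ℝ) : Measure ℝ :=
  MeasureTheory.volume.withDensity fun x => ENNReal.ofReal
    (Set.indicator (Set.Ioo 0 1)
      (fun y => (Real.Gamma (a + b) / (Real.Gamma a * Real.Gamma b)) *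
        y ^ (a - 1) * (1 - y) ^ (b - 1)) x)


/-- Transition probability of the generalized Pólya urn (7) (with `i = 0`): the
probability that `I_{j+1} = ε j` given `I₁ = ε 0, ..., I_j = ε (j-1)`. -/
noncomputable def urnStep (α θ : ℝ) (ε : ℕ → Bool) (j : ℕ) : ℝ :=
  let s : ℕ := ((Finset.range j).filter (fun i => ε i = true)).card
  if ε j then (1 - α + α * s) / (θ + 1 + α * j)
  else (θ + α + α * ((j : ℝ) - s)) / (θ + 1 + α * j)


lemma myGamma_add_nat (c : ℝ) (hc : 0 < c) (n : ℕ) :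
    Real.Gamma (c + n) = Real.Gamma c * ∏ k ∈ range n, (c + k) := by
  induction n with
  | zero => simp
  | succ n ih =>
    have h : c + (n + 1 : ℕ) = (c + n) + 1 := by push_cast; ring
    rw [h, Real.Gamma_add_one (by positivity), ih, prod_range_succ]
    ring

lemma myRealBeta (a b : ℝ) (ha : 0 < a) (hb : 0 < b) :
    ∫ x in Set.Ioo (0:ℝ) 1, x ^ (a-1) * (1-x) ^ (b-1)
      = Real.Gamma a * Real.Gamma b / Real.Gamma (a+b) := by
  have key : Complex.betaIntegral a b
      = ((∫ x in Set.Ioo (0:ℝ) 1, x ^ (a-1) * (1-x) ^ (b-1) : ℝ) : ℂ) := by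
    rw [Complex.betaIntegral]
    calc ∫ x in (0:ℝ)..1, (x:ℂ) ^ ((a:ℂ)-1) * ((1:ℂ)-(x:ℂ)) ^ ((b:ℂ)-1)
        = ∫ x in (0:ℝ)..1, ((x ^ (a-1) * (1-x) ^ (b-1) : ℝ) : ℂ) := by
          apply intervalIntegral.integral_congr
          intro x hx
          rw [Set.uIcc_of_le zero_le_one] at hx
          simp only []
          rw [Complex.ofReal_mul, Complex.ofReal_cpow hx.1,
            Complex.ofReal_cpow (by linarith [hx.2] : (0:ℝ) ≤ 1 - x)]
          push_cast
          ring
      _ = ((∫ x in (0:ℝ)..1, x ^ (a-1) * (1-x) ^ (b-1) : ℝ) : ℂ) :=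
          intervalIntegral.integral_ofReal
      _ = _ := by
          rw [intervalIntegral.integral_of_le zero_le_one,
            MeasureTheory.integral_Ioc_eq_integral_Ioo]
  have h := Complex.Gamma_mul_Gamma_eq_betaIntegral (s := (a:ℂ)) (t := (b:ℂ))
    (by simpa using ha) (by simpa using hb)
  rw [key, ← Complex.ofReal_add, Complex.Gamma_ofReal, Complex.Gamma_ofReal,
    Complex.Gamma_ofReal, ← Complex.ofReal_mul, ← Complex.ofReal_mul] at h
  have h' : Real.Gamma a * Real.Gamma b
      = Real.Gamma (a+b) * ∫ x in Set.Ioo (0:ℝ) 1, x ^ (a-1) * (1-x) ^ (b-1) := by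
    exact_mod_cast h
  have hab : Real.Gamma (a+b) ≠ 0 := (Real.Gamma_pos_of_pos (by positivity)).ne'
  field_simp [hab]
  linarith [h']

lemma myBetaMoment (a b : ℝ) (ha : 0 < a) (hb : 0 < b) (n : ℕ) :
    ∫ x, x ^ n ∂(urnBetaMeasure a b) = ∏ k ∈ range n, (a + k) / (a + b + k) := by
  set C := Real.Gamma (a + b) / (Real.Gamma a * Real.Gamma b) with hCdef
  set f : ℝ → ℝ := Set.indicator (Set.Ioo 0 1)
      (fun y => C * y ^ (a - 1) * (1 - y) ^ (b - 1)) with hfdef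
  have hGa := Real.Gamma_pos_of_pos ha
  have hGb := Real.Gamma_pos_of_pos hb
  have hGab := Real.Gamma_pos_of_pos (show (0:ℝ) < a + b by positivity)
  have hC : 0 ≤ C := by positivity
  have hf_nonneg : ∀ x, 0 ≤ f x := by
    intro x
    apply Set.indicator_nonneg
    intro y hy
    have := hy.1
    have := hy.2
    have h1 : (0:ℝ) ≤ y ^ (a-1) := Real.rpow_nonneg hy.1.le _
    have h2 : (0:ℝ) ≤ (1-y) ^ (b-1) := Real.rpow_nonneg (by linarith) _
    positivity
  have hf_meas : Measurable f := by
    apply Measurable.indicator _ measurableSet_Ioo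
    fun_prop
  have step1 : ∫ x, x ^ n ∂(urnBetaMeasure a b)
      = ∫ x, f x * x ^ n := by
    have hdens : urnBetaMeasure a b
        = volume.withDensity (fun x => ((Real.toNNReal (f x) : NNReal) : ENNReal)) := rfl
    rw [hdens, integral_withDensity_eq_integral_smul hf_meas.real_toNNReal]
    congr 1
    funext x
    rw [NNReal.smul_def, Real.coe_toNNReal _ (hf_nonneg x), smul_eq_mul]
  have step2 : ∫ x, f x * x ^ n
      = ∫ x in Set.Ioo (0:ℝ) 1, C * (x ^ (a + n - 1) * (1-x) ^ (b-1)) := by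
    rw [← integral_indicator measurableSet_Ioo]
    congr 1
    funext x
    by_cases hx : x ∈ Set.Ioo (0:ℝ) 1
    · rw [hfdef]
      simp only [Set.indicator_of_mem hx]
      have hx0 : (0:ℝ) < x := hx.1
      have : (x:ℝ) ^ (n:ℕ) = x ^ ((n:ℝ)) := (Real.rpow_natCast x n).symm
      rw [this]
      rw [show C * x ^ (a-1) * (1-x) ^ (b-1) * x ^ ((n:ℝ))
          = C * ((x ^ (a-1) * x ^ ((n:ℝ))) * (1-x) ^ (b-1)) by ring]
      rw [← Real.rpow_add hx0]
      ring_nf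
    · rw [hfdef]
      simp [Set.indicator_of_notMem hx]
  have step3 : ∫ x in Set.Ioo (0:ℝ) 1, C * (x ^ (a + n - 1) * (1-x) ^ (b-1))
      = C * (Real.Gamma (a + n) * Real.Gamma b / Real.Gamma (a + n + b)) := by
    rw [MeasureTheory.integral_const_mul, myRealBeta (a + n) b (by positivity) hb]
  rw [step1, step2, step3]
  have hP2 : Real.Gamma (a + b) * ∏ k ∈ range n, (a + b + k) ≠ 0 := by
    rw [← myGamma_add_nat (a+b) (by positivity) n]
    exact (Real.Gamma_pos_of_pos (by positivity)).ne'
  have hprod2 : (∏ k ∈ range n, (a + b + k)) ≠ 0 := by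
    intro h; apply hP2; rw [h]; ring
  rw [myGamma_add_nat a ha n, show a + n + b = a + b + n by ring,
    myGamma_add_nat (a+b) (by positivity) n, Finset.prod_div_distrib, hCdef]
  field_simp

/-- For the generalized Pólya urn, `P(I₁ = ⋯ = I_n = 1) = ∏_{k=0}^{n-1} (1-α+αk)/(θ+1+αk)`,
and this equals the `n`-th moment `E[Bⁿ]` of `B ~ Beta((1-α)/α, (θ+α)/α)`. -/
theorem stmt12 {Ω : Type*} [MeasurableSpace Ω] (P : Measure Ω) [IsProbabilityMeasure P]
    (α θ : ℝ) (hα : 0 < α) (hα1 : α < 1) (hθ : θ > -α)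
    (I : ℕ → Ω → Bool) (hIm : ∀ i, Measurable (I i))
    (hurn : ∀ (n : ℕ) (ε : ℕ → Bool),
      P {ω | ∀ j < n, I j ω = ε j} =
        ENNReal.ofReal (∏ j ∈ Finset.range n, urnStep α θ ε j)) :
    ∀ n : ℕ,
      P {ω | ∀ j < n, I j ω = true} =
        ENNReal.ofReal (∏ k ∈ Finset.range n, (1 - α + α * k) / (θ + 1 + α * k)) ∧
      (∏ k ∈ Finset.range n, (1 - α + α * k) / (θ + 1 + α * k)) =
        ∫ x, x ^ n ∂(urnBetaMeasure ((1 - α) / α) ((θ + α) / α)) := by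
  intro n
  have hα0 : α ≠ 0 := hα.ne'
  constructor
  · have h := hurn n (fun _ => true)
    rw [h]
    congr 1
    apply Finset.prod_congr rfl
    intro j hj
    simp [urnStep]
  · have ha : (0:ℝ) < (1 - α) / α := div_pos (by linarith) hα
    have hb : (0:ℝ) < (θ + α) / α := div_pos (by linarith) hα
    rw [myBetaMoment _ _ ha hb n]
    apply Finset.prod_congr rfl
    intro k hk
    have hnum : (1 - α) / α + (k:ℝ) = (1 - α + α * k) / α := by
      field_simp
    have hden : (1 - α) / α + (θ + α) / α + (k:ℝ) = (θ + 1 + α * k) / α := by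
      field_simp
      ring
    rw [hnum, hden, div_div_div_cancel_right₀ (hc := hα0)]
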